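/- Let A ∈ ℝ^{Q×Q} be a left-stochastic primitive matrix with Perron vector r (Ar = r, 1ᵀr = 1, r > 0 entrywise), and let R = diag(r). If A is locally balanced, i.e., RAᵀ = AR, then the matrix R − RAᵀ is symmetric and positive semi-definite. -/

import Mathlib

open Matrix

lemma lap_psd {n : Type*} [Fintype n] [DecidableEq n] (w : Matrix n n ℝ)
    (hsymm : wᵀ = w) (hnn : ∀ i j, 0 ≤ w i j) :
    (Matrix.diagonal (fun i => ∑ j, w i j) - w).PosSemidef := by
  have hws : ∀ i j, w i j = w j i := fun i j => by
    have := congrFun (congrFun hsymm i) j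
    simpa using this.symm
  refine Matrix.PosSemidef.of_dotProduct_mulVec_nonneg ?_ ?_
  · unfold Matrix.IsHermitian
    rw [conjTranspose_eq_transpose_of_trivial, transpose_sub, diagonal_transpose, hsymm]
  · intro x
    have hx : star x = x := by simp
    rw [hx]
    have key : dotProduct x ((Matrix.diagonal (fun i => ∑ j, w i j) - w) *ᵥ x)
        = (1/2) * ∑ i, ∑ j, w i j * (x i - x j)^2 := by
      rw [sub_mulVec, dotProduct_sub]
      have p1 : dotProduct x (Matrix.diagonal (fun i => ∑ j, w i j) *ᵥ x)
          = ∑ i, ∑ j, w i j * (x i)^2 := by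
        simp only [dotProduct, mulVec_diagonal]
        refine Finset.sum_congr rfl fun i _ => ?_
        rw [Finset.sum_mul, Finset.mul_sum]
        exact Finset.sum_congr rfl fun j _ => by ring
      have p2 : dotProduct x (w *ᵥ x) = ∑ i, ∑ j, x i * (w i j * x j) := by
        simp only [dotProduct, mulVec, Finset.mul_sum]
      have hswap : ∑ i, ∑ j, w i j * (x j)^2 = ∑ i, ∑ j, w i j * (x i)^2 := by
        rw [Finset.sum_comm]
        exact Finset.sum_congr rfl fun j _ => Finset.sum_congr rfl fun i _ => by rw [hws i j]
      have h2 : ∑ i, ∑ j, w i j * (x i - x j)^2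
          = ∑ i, ∑ j, ((w i j * (x i)^2 + w i j * (x j)^2)
              - (x i * (w i j * x j) + x i * (w i j * x j))) := by
        exact Finset.sum_congr rfl fun i _ => Finset.sum_congr rfl fun j _ => by ring
      rw [p1, p2, h2]
      simp only [Finset.sum_sub_distrib, Finset.sum_add_distrib, hswap]
      ring
    rw [key]
    have h3 : 0 ≤ ∑ i, ∑ j, w i j * (x i - x j)^2 :=
      Finset.sum_nonneg fun i _ => Finset.sum_nonneg fun j _ =>
        mul_nonneg (hnn i j) (sq_nonneg _)
    linarith

theorem stmt_1 (Q : ℕ) (A : Matrix (Fin Q) (Fin Q) ℝ)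
    (hls : ∀ j, ∑ i, A i j = 1)
    (hprim : ∃ j0 : ℕ, 1 ≤ j0 ∧ ∀ i j, 0 < (A ^ j0) i j)
    (r : Fin Q → ℝ) (hAr : A.mulVec r = r) (hsum : ∑ i, r i = 1)
    (hpos : ∀ i, 0 < r i)
    (hbal : Matrix.diagonal r * Aᵀ = A * Matrix.diagonal r) :
    (Matrix.diagonal r - Matrix.diagonal r * Aᵀ).PosSemidef := by
  classical
  obtain ⟨j0, hj0, hBpos⟩ := hprim
  set s : Fin Q → ℝ := fun i => Real.sqrt (r i) with hs
  have hspos : ∀ i, 0 < s i := fun i => Real.sqrt_pos.mpr (hpos i)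
  have hss : ∀ i, s i * s i = r i := fun i => Real.mul_self_sqrt (hpos i).le
  set D : Matrix (Fin Q) (Fin Q) ℝ := Matrix.diagonal s with hD
  set E : Matrix (Fin Q) (Fin Q) ℝ := Matrix.diagonal (fun i => (s i)⁻¹) with hE
  have hDE : D * E = 1 := by
    rw [hD, hE, diagonal_mul_diagonal]
    rw [show (fun i => s i * (s i)⁻¹) = fun _ => (1:ℝ) from
      funext fun i => mul_inv_cancel₀ (hspos i).ne']
    exact Matrix.diagonal_one
  have hED : E * D = 1 := by
    rw [hD, hE, diagonal_mul_diagonal]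
    rw [show (fun i => (s i)⁻¹ * s i) = fun _ => (1:ℝ) from
      funext fun i => inv_mul_cancel₀ (hspos i).ne']
    exact Matrix.diagonal_one
  have hDD : D * D = Matrix.diagonal r := by
    rw [hD, diagonal_mul_diagonal]
    exact congrArg _ (funext hss)
  have hEr : E * Matrix.diagonal r = D := by
    rw [hE, hD, diagonal_mul_diagonal]
    refine congrArg _ (funext fun i => ?_)
    rw [← hss i, inv_mul_cancel_left₀ (hspos i).ne']
  -- symmetric conjugate S = D Aᵀ E
  set S : Matrix (Fin Q) (Fin Q) ℝ := D * Aᵀ * E with hSdef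
  -- balance for powers
  have hbaln : ∀ n : ℕ, Matrix.diagonal r * (Aᵀ)^n = A^n * Matrix.diagonal r := by
    intro n
    induction n with
    | zero => simp
    | succ n ih =>
      rw [pow_succ', pow_succ', ← mul_assoc, hbal, mul_assoc, ih, ← mul_assoc]
  -- column sums of powers
  have hcol : ∀ (n : ℕ) (j : Fin Q), ∑ i, (A^n) i j = 1 := by
    intro n
    induction n with
    | zero => intro j; simp [Matrix.one_apply]
    | succ n ih =>
      intro j
      rw [pow_succ']
      simp only [Matrix.mul_apply]
      rw [Finset.sum_comm]
      have : ∀ k, ∑ i, A i k * (A^n) k j = (A^n) k j := by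
        intro k; rw [← Finset.sum_mul, hls k, one_mul]
      rw [Finset.sum_congr rfl fun k _ => this k]
      exact ih j
  -- powers of S
  have hSpow : ∀ n : ℕ, S^n = D * (Aᵀ)^n * E := by
    intro n
    induction n with
    | zero => simp [hDE]
    | succ n ih =>
      rw [pow_succ', pow_succ', hSdef, ih, ← mul_assoc, ← mul_assoc]
      rw [mul_assoc (D * Aᵀ) E D, hED, mul_one, mul_assoc D Aᵀ ((Aᵀ)^n), ← mul_assoc]
  set B : Matrix (Fin Q) (Fin Q) ℝ := A ^ j0 with hB
  set w : Matrix (Fin Q) (Fin Q) ℝ := Matrix.diagonal r * Bᵀ with hw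
  have hbalB : Matrix.diagonal r * Bᵀ = B * Matrix.diagonal r := by
    rw [hB, transpose_pow]; exact hbaln j0
  have hwsym : wᵀ = w := by
    rw [hw, transpose_mul, diagonal_transpose, transpose_transpose, ← hbalB]
  have hwentry : ∀ i j, w i j = r i * B j i := by
    intro i j
    rw [hw, Matrix.diagonal_mul, transpose_apply]
  have hwnn : ∀ i j, 0 ≤ w i j := fun i j => by
    rw [hwentry]; exact mul_nonneg (hpos i).le (hBpos j i).le
  have hwrow : ∀ i, ∑ j, w i j = r i := by
    intro i
    simp only [hwentry]
    rw [← Finset.mul_sum, hcol j0 i, mul_one]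
  have hM' : (Matrix.diagonal r - w).PosSemidef := by
    have := lap_psd w hwsym hwnn
    rwa [show (fun i => ∑ j, w i j) = r from funext hwrow] at this
  -- 1 - S^j0 is PSD
  have hEherm : Eᴴ = E := by
    rw [hE, conjTranspose_eq_transpose_of_trivial, diagonal_transpose]
  have hDherm : Dᴴ = D := by
    rw [hD, conjTranspose_eq_transpose_of_trivial, diagonal_transpose]
  have hconj : E * (Matrix.diagonal r - w) * E = 1 - S ^ j0 := by
    rw [hw, mul_sub, sub_mul, hEr, hDE, hSpow j0, hB, transpose_pow, ← mul_assoc, hEr]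
  have hPSDj : (1 - S ^ j0).PosSemidef := by
    have h := hM'.mul_mul_conjTranspose_same E
    rw [hEherm] at h
    rwa [hconj] at h
  -- S is hermitian
  have hSalt : S = E * A * D := by
    have h1 : Matrix.diagonal r * Aᵀ * E = A * D := by
      rw [hbal, ← hDD, mul_assoc, mul_assoc, hDE, mul_one]
    have h2 : D * Aᵀ * E = E * (Matrix.diagonal r * Aᵀ * E) := by
      rw [← mul_assoc, ← mul_assoc, hEr]
    rw [hSdef, h2, h1, mul_assoc]
  have hSherm : S.IsHermitian := by
    unfold Matrix.IsHermitian
    rw [conjTranspose_eq_transpose_of_trivial, hSdef, transpose_mul, transpose_mul,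
      transpose_transpose, hE, hD, diagonal_transpose, diagonal_transpose, ← hE, ← hD,
      ← mul_assoc, ← hSalt, hSdef]
  -- eigenvalues of S are ≤ 1
  have heig : ∀ i, hSherm.eigenvalues i ≤ 1 := by
    intro i
    set v : Fin Q → ℝ := ⇑(hSherm.eigenvectorBasis i) with hv
    set μ : ℝ := hSherm.eigenvalues i with hμ
    have hvec : ∀ n : ℕ, (S ^ n) *ᵥ v = (μ ^ n) • v := by
      intro n
      induction n with
      | zero => simp
      | succ n ih =>
        rw [pow_succ, ← Matrix.mulVec_mulVec, hSherm.mulVec_eigenvectorBasis,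
          Matrix.mulVec_smul, ih, smul_smul, pow_succ]
        exact congrArg (· • v) (mul_comm _ _)
    have hvne : v ≠ 0 := by
      have := hSherm.eigenvectorBasis.orthonormal.ne_zero i
      intro hc
      apply this
      ext k
      exact congrFun hc k
    have hvv : 0 < dotProduct v v := by
      obtain ⟨k, hk⟩ : ∃ k, v k ≠ 0 := by
        by_contra hc
        push_neg at hc
        exact hvne (funext hc)
      have hkpos : 0 < v k * v k := mul_self_pos.mpr hk
      exact Finset.sum_pos' (fun i _ => mul_self_nonneg _) ⟨k, Finset.mem_univ k, hkpos⟩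
    have hform := hPSDj.dotProduct_mulVec_nonneg v
    have hstar : star v = v := by simp
    rw [hstar, sub_mulVec, one_mulVec, hvec j0, dotProduct_sub, dotProduct_smul,
      smul_eq_mul] at hform
    have h1 : μ ^ j0 ≤ 1 := le_of_mul_le_mul_right (by linarith) hvv
    by_contra hc
    push_neg at hc
    have : 1 < μ ^ j0 := one_lt_pow₀ hc (by omega)
    linarith
  -- 1 - S is PSD via spectral theorem
  have hPSD1 : (1 - S).PosSemidef := by
    set U : Matrix (Fin Q) (Fin Q) ℝ := (hSherm.eigenvectorUnitary : Matrix (Fin Q) (Fin Q) ℝ) with hU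
    have hUu : U * star U = 1 := (Matrix.mem_unitaryGroup_iff).mp hSherm.eigenvectorUnitary.2
    have hdecomp : 1 - S = U * Matrix.diagonal (fun i => 1 - hSherm.eigenvalues i) * star U := by
      have hst := hSherm.spectral_theorem
      have : Matrix.diagonal (fun i => 1 - hSherm.eigenvalues i)
          = 1 - Matrix.diagonal (RCLike.ofReal ∘ hSherm.eigenvalues) := by
        rw [← Matrix.diagonal_one, Matrix.diagonal_sub]
        rfl
      rw [this, mul_sub, sub_mul, mul_one, hUu]
      exact congrArg (1 - ·) hst
    rw [hdecomp, Matrix.star_eq_conjTranspose]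
    exact (Matrix.PosSemidef.diagonal (fun i => sub_nonneg.mpr (heig i))).mul_mul_conjTranspose_same U
  have hfinal : D * (1 - S) * Dᴴ = Matrix.diagonal r - Matrix.diagonal r * Aᵀ := by
    rw [hDherm, mul_sub, sub_mul, mul_one, hDD, hSdef, ← mul_assoc, mul_assoc (D * (D * Aᵀ)) E D,
      hED, mul_one, ← mul_assoc, hDD]
  rw [← hfinal]
  exact hPSD1.mul_mul_conjTranspose_same D
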